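/- Let γ : ℝ → ℝ be a locally Lipschitz class K function, let c : ℝ → ℝ be continuous with c(t) > 0 for all t, and let h : ℝ → ℝ be differentiable with h'(t) ≥ −c(t)·γ(h(t)) for all t ≥ 0. If h(0) ≥ 0, then h(t) ≥ 0 for all t ≥ 0. -/
import Mathlib


/-- Comparison-lemma argument used in Theorems 2 and 3 of the paper: if `γ` is a
locally Lipschitz class K function, `c` is continuous and positive, and
`h' ≥ -c(t)·γ(h(t))` for `t ≥ 0` with `h(0) ≥ 0`, then `h(t) ≥ 0` for all `t ≥ 0`. -/
theorem stmt_3 (γ : ℝ → ℝ)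
    (hγmono : StrictMono γ) (hγ0 : γ 0 = 0) (hγlip : LocallyLipschitz γ)
    (c : ℝ → ℝ) (hc : Continuous c) (hcpos : ∀ t : ℝ, 0 < c t)
    (h : ℝ → ℝ) (hh : Differentiable ℝ h)
    (hineq : ∀ t : ℝ, 0 ≤ t → deriv h t ≥ -(c t * γ (h t)))
    (h0 : 0 ≤ h 0) :
    ∀ t : ℝ, 0 ≤ t → 0 ≤ h t := by
  intro t ht
  by_contra hneg
  push_neg at hneg
  set S : Set ℝ := Set.Icc 0 t ∩ {u | 0 ≤ h u} with hS
  have hSne : (0 : ℝ) ∈ S := ⟨⟨le_refl 0, ht⟩, h0⟩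
  have hSclosed : IsClosed S :=
    isClosed_Icc.inter (isClosed_le continuous_const hh.continuous)
  have hSbdd : BddAbove S := ⟨t, fun u hu => hu.1.2⟩
  set s := sSup S with hs
  have hsS : s ∈ S := hSclosed.csSup_mem ⟨0, hSne⟩ hSbdd
  have hs0 : 0 ≤ s := hsS.1.1
  have hst : s ≤ t := hsS.1.2
  have hhs : 0 ≤ h s := hsS.2
  have hsne : s ≠ t := by
    intro he; rw [he] at hhs; linarith
  have hslt : s < t := lt_of_le_of_ne hst hsne
  -- on (s, t], h < 0
  have hlt : ∀ u, s < u → u ≤ t → h u < 0 := by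
    intro u hsu hut
    by_contra hge
    push_neg at hge
    have : u ∈ S := ⟨⟨le_trans hs0 hsu.le, hut⟩, hge⟩
    exact absurd (le_csSup hSbdd this) (not_le.mpr hsu)
  -- h strictly mono on [s, t]
  have hmono : StrictMonoOn h (Set.Icc s t) := by
    apply strictMonoOn_of_deriv_pos (convex_Icc s t) hh.continuous.continuousOn
    intro u hu
    rw [interior_Icc] at hu
    have hu0 : 0 ≤ u := le_trans hs0 hu.1.le
    have hhu : h u < 0 := hlt u hu.1 hu.2.le
    have hγu : γ (h u) < 0 := hγ0 ▸ hγmono hhu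
    have : 0 < -(c u * γ (h u)) := by nlinarith [hcpos u]
    exact lt_of_lt_of_le this (hineq u hu0)
  have := hmono (Set.left_mem_Icc.mpr hst) (Set.right_mem_Icc.mpr hst) hslt
  linarith
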